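/- Variance bound for weighted bilinear forms of a symmetric noise matrix (Lemma D.5 part 1, with explicit constant). Let n >= 1 and let W = (w_{i,l}) be an n x n symmetric random matrix with zero diagonal whose upper-triangular entries are jointly independent, mean zero, with Var(w_{i,l}) <= 1/n. Let b_1, ..., b_n in R^n be deterministic vectors with ||b_j||_infty <= 1/n for every j. Then for every subset S of [n] x [n] and every family of real coefficients (theta_{i,j})_{(i,j) in S}: Var( sum_{(i,j) in S} theta_{i,j} e_i^T W b_j ) <= (2/n) sum_{(i,j) in S} theta_{i,j}^2. -/

import Mathlib

open MeasureTheory ProbabilityTheory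

private lemma vwb_swap_sum {n : ℕ} (F : Fin n × Fin n → ℝ) :
    ∑ q ∈ Finset.univ.filter (fun q : Fin n × Fin n => q.2 < q.1), F q
      = ∑ q ∈ Finset.univ.filter (fun q : Fin n × Fin n => q.1 < q.2), F (q.2, q.1) := by
  refine Finset.sum_nbij' (fun q => (q.2, q.1)) (fun q => (q.2, q.1)) ?_ ?_ ?_ ?_ ?_ <;>
    simp [Finset.mem_filter]

/-- **Variance bound for weighted bilinear forms of a symmetric noise matrix**
(Lemma D.5, part 1, with explicit constant).  Let `W` be a random symmetric `n × n` matrix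
with zero diagonal, jointly independent mean-zero upper-triangular entries with
`Var(w_{i,l}) ≤ 1/n`, and let `b₁,…,bₙ` be deterministic vectors with `‖b_j‖_∞ ≤ 1/n`.
Then for every `S ⊆ [n] × [n]` and coefficients `θ`:
`Var(∑_{(i,j) ∈ S} θ_{i,j} eᵢᵀ W b_j) ≤ (2/n) ∑_{(i,j) ∈ S} θ_{i,j}²`. -/
theorem variance_weighted_bilinear
    {Ω : Type*} [MeasurableSpace Ω] (μ : Measure Ω) [IsProbabilityMeasure μ]
    (n : ℕ) (hn : 1 ≤ n) (W : Ω → Matrix (Fin n) (Fin n) ℝ)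
    (hsymm : ∀ ω, (W ω).IsSymm) (hdiag : ∀ ω i, W ω i i = 0)
    (hmeas : ∀ i j, Measurable fun ω => W ω i j)
    (hindep : iIndepFun
      (fun e : {p : Fin n × Fin n // p.1 < p.2} => fun ω => W ω e.1.1 e.1.2) μ)
    (hmean : ∀ i j, ∫ ω, W ω i j ∂μ = 0)
    (hL2 : ∀ i j, MemLp (fun ω => W ω i j) 2 μ)
    (hvar : ∀ i j, variance (fun ω => W ω i j) μ ≤ 1 / n)
    (b : Fin n → Fin n → ℝ) (hb : ∀ j l, |b j l| ≤ 1 / n)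
    (S : Finset (Fin n × Fin n)) (θ : Fin n × Fin n → ℝ) :
    variance (fun ω => ∑ p ∈ S, θ p * ∑ l, W ω p.1 l * b p.2 l) μ
      ≤ 2 / n * ∑ p ∈ S, (θ p) ^ 2 := by
  classical
  have hnpos : (0 : ℝ) < n := by exact_mod_cast hn
  set A : Fin n → Fin n → ℝ :=
    fun i l => ∑ p ∈ S.filter (fun p => p.1 = i), θ p * b p.2 l with hA
  set T : Finset (Fin n × Fin n) := Finset.univ.filter (fun q => q.1 < q.2) with hT
  -- Step 1: rewrite the random variable as a linear combination of upper-triangular entries.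
  have hrw : ∀ ω, (∑ p ∈ S, θ p * ∑ l, W ω p.1 l * b p.2 l)
      = ∑ q ∈ T, (A q.1 q.2 + A q.2 q.1) * W ω q.1 q.2 := by
    intro ω
    have huniv : (∑ q : Fin n × Fin n, A q.1 q.2 * W ω q.1 q.2)
        = ∑ p ∈ S, θ p * ∑ l, W ω p.1 l * b p.2 l := by
      rw [Fintype.sum_prod_type]
      calc ∑ i, ∑ l, A i l * W ω i l
          = ∑ i, ∑ p ∈ S.filter (fun p => p.1 = i),
              θ p * ∑ l, W ω p.1 l * b p.2 l := by
            refine Finset.sum_congr rfl fun i _ => ?_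
            simp only [hA, Finset.sum_mul]
            rw [Finset.sum_comm]
            refine Finset.sum_congr rfl fun p hp => ?_
            have hpi : p.1 = i := (Finset.mem_filter.1 hp).2
            rw [Finset.mul_sum]
            exact Finset.sum_congr rfl fun l _ => by rw [hpi]; ring
        _ = _ := Finset.sum_fiberwise S (fun p => p.1) _
    rw [← huniv]
    -- split the full sum by comparing coordinates
    rw [← Finset.sum_filter_add_sum_filter_not Finset.univ (fun q : Fin n × Fin n => q.1 < q.2)]
    have hlow : ∑ q ∈ Finset.univ.filter (fun q : Fin n × Fin n => ¬ q.1 < q.2),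
        A q.1 q.2 * W ω q.1 q.2
        = ∑ q ∈ Finset.univ.filter (fun q : Fin n × Fin n => q.2 < q.1),
            A q.1 q.2 * W ω q.1 q.2 := by
      refine (Finset.sum_subset ?_ ?_).symm
      · intro q hq
        simp only [Finset.mem_filter, Finset.mem_univ, true_and] at hq ⊢
        exact not_lt_of_gt hq
      · intro q hq hq'
        simp only [Finset.mem_filter, Finset.mem_univ, true_and] at hq hq'
        have : q.1 = q.2 := le_antisymm (not_lt.1 hq') (not_lt.1 hq)
        rw [← this, hdiag, mul_zero]
    rw [hlow, vwb_swap_sum (fun q => A q.1 q.2 * W ω q.1 q.2)]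
    simp only [← Finset.sum_add_distrib]
    refine Finset.sum_congr rfl fun q _ => ?_
    have hsym : W ω q.2 q.1 = W ω q.1 q.2 := (hsymm ω).apply q.1 q.2
    simp only [hsym]
    ring
  -- Step 2: variance of the sum of independent scaled variables.
  have hXrw : (fun ω => ∑ p ∈ S, θ p * ∑ l, W ω p.1 l * b p.2 l)
      = ∑ e : {p : Fin n × Fin n // p.1 < p.2},
          (fun ω => (A e.1.1 e.1.2 + A e.1.2 e.1.1) * W ω e.1.1 e.1.2) := by
    funext ω
    rw [hrw ω, Finset.sum_apply]
    exact Finset.sum_subtype T (by simp [hT]) _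
  rw [hXrw]
  have hvs := IndepFun.variance_sum (μ := μ)
    (X := fun e : {p : Fin n × Fin n // p.1 < p.2} =>
      fun ω => (A e.1.1 e.1.2 + A e.1.2 e.1.1) * W ω e.1.1 e.1.2)
    (s := Finset.univ)
    (fun e _ => (hL2 e.1.1 e.1.2).const_mul _)
    (fun e _ f _ hef => (hindep.indepFun hef).comp
      (measurable_const_mul _) (measurable_const_mul _))
  rw [hvs]
  have hvarsum : ∑ e : {p : Fin n × Fin n // p.1 < p.2},
      variance (fun ω => (A e.1.1 e.1.2 + A e.1.2 e.1.1) * W ω e.1.1 e.1.2) μ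
      ≤ (1 / n) * ∑ q ∈ T, (A q.1 q.2 + A q.2 q.1) ^ 2 := by
    rw [Finset.mul_sum, Finset.sum_subtype T (p := fun q : Fin n × Fin n => q.1 < q.2)
      (by simp [hT]) (fun q => 1 / (n : ℝ) * (A q.1 q.2 + A q.2 q.1) ^ 2)]
    refine Finset.sum_le_sum fun e _ => ?_
    rw [variance_const_mul]
    rw [mul_comm (1 / (n : ℝ))]
    exact mul_le_mul_of_nonneg_left (hvar e.1.1 e.1.2) (sq_nonneg _)
  refine hvarsum.trans ?_
  -- Step 3: combinatorial bound  ∑_{q ∈ T} (A q.1 q.2 + A q.2 q.1)^2 ≤ 2 ∑ θ².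
  have hAsq : ∑ q : Fin n × Fin n, A q.1 q.2 ^ 2 ≤ ∑ p ∈ S, θ p ^ 2 := by
    rw [Fintype.sum_prod_type]
    rw [← Finset.sum_fiberwise S (fun p => p.1) (fun p => θ p ^ 2)]
    refine Finset.sum_le_sum fun i _ => ?_
    have hbsum : ∀ j : Fin n, ∑ l, |b j l| ≤ 1 := by
      intro j
      calc ∑ l, |b j l| ≤ ∑ _l : Fin n, 1 / (n : ℝ) :=
            Finset.sum_le_sum fun l _ => hb j l
        _ = 1 := by
            rw [Finset.sum_const, Finset.card_univ, Fintype.card_fin, nsmul_eq_mul]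
            field_simp
    have hfilter_card : ∀ l : Fin n,
        ∑ p ∈ S.filter (fun p => p.1 = i), |b p.2 l| ≤ 1 := by
      intro l
      have hsub : S.filter (fun p => p.1 = i) ⊆ {i} ×ˢ Finset.univ := by
        intro p hp
        rcases Finset.mem_filter.1 hp with ⟨_, hpi⟩
        exact Finset.mem_product.2 ⟨Finset.mem_singleton.2 hpi, Finset.mem_univ _⟩
      calc ∑ p ∈ S.filter (fun p => p.1 = i), |b p.2 l|
          ≤ ∑ p ∈ S.filter (fun p => p.1 = i), 1 / (n : ℝ) :=
            Finset.sum_le_sum fun p _ => hb p.2 l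
        _ = (S.filter (fun p => p.1 = i)).card * (1 / (n : ℝ)) := by
            rw [Finset.sum_const, nsmul_eq_mul]
        _ ≤ n * (1 / (n : ℝ)) := by
            refine mul_le_mul_of_nonneg_right ?_ (by positivity)
            have := Finset.card_le_card hsub
            rw [Finset.card_product, Finset.card_singleton, Finset.card_univ,
              Fintype.card_fin, one_mul] at this
            exact_mod_cast this
        _ = 1 := by field_simp
    calc ∑ l, A i l ^ 2
        ≤ ∑ l, ∑ p ∈ S.filter (fun p => p.1 = i), θ p ^ 2 * |b p.2 l| := by
          refine Finset.sum_le_sum fun l _ => ?_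
          have hCS : A i l ^ 2 ≤
              (∑ p ∈ S.filter (fun p => p.1 = i), θ p ^ 2 * |b p.2 l|) *
              (∑ p ∈ S.filter (fun p => p.1 = i), |b p.2 l|) := by
            refine Finset.sum_sq_le_sum_mul_sum_of_sq_eq_mul _
              (fun p _ => by positivity) (fun p _ => abs_nonneg _) (fun p _ => ?_)
            rw [mul_pow, mul_assoc, ← sq_abs (b p.2 l)]; ring
          refine hCS.trans ?_
          have h1 : (0 : ℝ) ≤ ∑ p ∈ S.filter (fun p => p.1 = i), θ p ^ 2 * |b p.2 l| :=
            Finset.sum_nonneg fun p _ => by positivity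
          calc _ ≤ (∑ p ∈ S.filter (fun p => p.1 = i), θ p ^ 2 * |b p.2 l|) * 1 :=
                mul_le_mul_of_nonneg_left (hfilter_card l) h1
            _ = _ := mul_one _
      _ = ∑ p ∈ S.filter (fun p => p.1 = i), θ p ^ 2 * ∑ l, |b p.2 l| := by
          rw [Finset.sum_comm]
          exact Finset.sum_congr rfl fun p _ => by rw [Finset.mul_sum]
      _ ≤ ∑ p ∈ S.filter (fun p => p.1 = i), θ p ^ 2 := by
          refine Finset.sum_le_sum fun p _ => ?_
          calc θ p ^ 2 * ∑ l, |b p.2 l| ≤ θ p ^ 2 * 1 :=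
                mul_le_mul_of_nonneg_left (hbsum p.2) (sq_nonneg _)
            _ = θ p ^ 2 := mul_one _
  have hTsum : ∑ q ∈ T, (A q.1 q.2 + A q.2 q.1) ^ 2 ≤ 2 * ∑ p ∈ S, θ p ^ 2 := by
    have step1 : ∑ q ∈ T, (A q.1 q.2 + A q.2 q.1) ^ 2
        ≤ ∑ q ∈ T, (2 * A q.1 q.2 ^ 2 + 2 * A q.2 q.1 ^ 2) :=
      Finset.sum_le_sum fun q _ => by nlinarith [sq_nonneg (A q.1 q.2 - A q.2 q.1)]
    refine step1.trans ?_
    rw [Finset.sum_add_distrib, ← Finset.mul_sum, ← Finset.mul_sum]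
    have hswap : ∑ q ∈ T, A q.2 q.1 ^ 2
        = ∑ q ∈ Finset.univ.filter (fun q : Fin n × Fin n => q.2 < q.1), A q.1 q.2 ^ 2 := by
      rw [vwb_swap_sum (fun q => A q.1 q.2 ^ 2)]
    rw [hswap, ← mul_add]
    have hdisj : Disjoint T (Finset.univ.filter (fun q : Fin n × Fin n => q.2 < q.1)) := by
      rw [Finset.disjoint_left]
      intro q hq hq'
      simp only [hT, Finset.mem_filter, Finset.mem_univ, true_and] at hq hq'
      exact absurd hq' (not_lt_of_gt hq)
    have hunion : ∑ q ∈ T, A q.1 q.2 ^ 2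
        + ∑ q ∈ Finset.univ.filter (fun q : Fin n × Fin n => q.2 < q.1), A q.1 q.2 ^ 2
        = ∑ q ∈ T ∪ Finset.univ.filter (fun q : Fin n × Fin n => q.2 < q.1),
            A q.1 q.2 ^ 2 := (Finset.sum_union hdisj).symm
    rw [hunion]
    have hle : ∑ q ∈ T ∪ Finset.univ.filter (fun q : Fin n × Fin n => q.2 < q.1),
        A q.1 q.2 ^ 2 ≤ ∑ q : Fin n × Fin n, A q.1 q.2 ^ 2 :=
      Finset.sum_le_sum_of_subset_of_nonneg (Finset.subset_univ _)
        (fun q _ _ => sq_nonneg _)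
    have := hle.trans hAsq
    linarith
  calc (1 / (n : ℝ)) * ∑ q ∈ T, (A q.1 q.2 + A q.2 q.1) ^ 2
      ≤ (1 / (n : ℝ)) * (2 * ∑ p ∈ S, θ p ^ 2) :=
        mul_le_mul_of_nonneg_left hTsum (by positivity)
    _ = 2 / n * ∑ p ∈ S, θ p ^ 2 := by ring
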